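/- (Exactness of the face quadrature rule for affine exponents.) For all pairwise distinct real numbers a, b, c, ∫ s in (0:ℝ)..1, ∫ t in (0:ℝ)..(1 − s), Real.exp ((1 − s − t) * a + s * b + t * c) = Real.exp a / ((a − b) * (a − c)) + Real.exp b / ((b − a) * (b − c)) + Real.exp c / ((c − a) * (c − b)). Consequently, the face quadrature rule (3.18) for the average ⨍ e^{φ} dA over a triangle (which equals 2 times this iterated integral) is exact whenever θ = grad φ is constant on the face, i.e., φ is affine on the triangle with vertex values a, b, c. -/

import Mathlib

open Real

lemma exp_linear_integral (k m T : ℝ) (hm : m ≠ 0) :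
    ∫ t in (0:ℝ)..T, Real.exp (k + t * m)
      = (Real.exp (k + T * m) - Real.exp k) / m := by
  have h : ∀ t : ℝ, Real.exp (k + t * m) = Real.exp (m * t + k) := by
    intro t; ring_nf
  simp only [h]
  rw [intervalIntegral.integral_comp_mul_add Real.exp hm k]
  rw [integral_exp]
  field_simp
  rw [smul_eq_mul, mul_zero, zero_add, ← mul_assoc, mul_one_div_cancel hm, one_mul]


/-- Exactness of the face quadrature rule for affine exponents: the integral of
`e^{φ}` over the reference triangle, with `φ` affine taking values `a`, `b`, `c`
at the vertices, equals the three-point exponential formula. -/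
theorem face_quadrature_exact (a b c : ℝ)
    (hab : a ≠ b) (hac : a ≠ c) (hbc : b ≠ c) :
    (∫ s in (0:ℝ)..1, ∫ t in (0:ℝ)..(1 - s),
        Real.exp ((1 - s - t) * a + s * b + t * c))
      = Real.exp a / ((a - b) * (a - c)) + Real.exp b / ((b - a) * (b - c))
        + Real.exp c / ((c - a) * (c - b)) := by
  have hca : c - a ≠ 0 := sub_ne_zero.mpr (Ne.symm hac)
  have hbc' : b - c ≠ 0 := sub_ne_zero.mpr hbc
  have hba : b - a ≠ 0 := sub_ne_zero.mpr (Ne.symm hab)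
  have hab2 : a - b ≠ 0 := sub_ne_zero.mpr hab
  have hac2 : a - c ≠ 0 := sub_ne_zero.mpr hac
  have hcb : c - b ≠ 0 := sub_ne_zero.mpr (Ne.symm hbc)
  have inner : ∀ s : ℝ, (∫ t in (0:ℝ)..(1 - s),
      Real.exp ((1 - s - t) * a + s * b + t * c))
      = (Real.exp (c + s * (b - c)) - Real.exp (a + s * (b - a))) / (c - a) := by
    intro s
    have h : ∀ t : ℝ, (1 - s - t) * a + s * b + t * c
        = ((1 - s) * a + s * b) + t * (c - a) := by intro t; ring
    simp only [h]
    rw [exp_linear_integral _ _ _ hca]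
    have e1 : (1 - s) * a + s * b + (1 - s) * (c - a) = c + s * (b - c) := by ring
    have e2 : (1 - s) * a + s * b = a + s * (b - a) := by ring
    rw [e1, e2]
  simp only [inner]
  have hi1 : IntervalIntegrable (fun s : ℝ => Real.exp (c + s * (b - c)))
      MeasureTheory.volume 0 1 :=
    (Real.continuous_exp.comp (by continuity)).intervalIntegrable _ _
  have hi2 : IntervalIntegrable (fun s : ℝ => Real.exp (a + s * (b - a)))
      MeasureTheory.volume 0 1 :=
    (Real.continuous_exp.comp (by continuity)).intervalIntegrable _ _
  rw [intervalIntegral.integral_div, intervalIntegral.integral_sub hi1 hi2]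
  rw [exp_linear_integral _ _ _ hbc', exp_linear_integral _ _ _ hba]
  have e3 : c + 1 * (b - c) = b := by ring
  have e4 : a + 1 * (b - a) = b := by ring
  rw [e3, e4]
  field_simp
  ring
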